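/- Let r > 0 and consider two identical spheres of radius r at separation ε > 0. Then C₁₁(ε) + C₁₂(ε) converges to 4πr·log 2 as ε → 0⁺. -/

import Mathlib

open Real Filter Topology

/-- The parameter α̃(ε) = √(ε(r + ε/4)) for two identical spheres of radius `r`. -/
noncomputable def alphaTilde (r ε : ℝ) : ℝ := Real.sqrt (ε * (r + ε / 4))

/-- The bispherical coordinate ξ₀(ε) = arsinh(α̃(ε)/r) of the sphere boundaries. -/
noncomputable def xi0 (r ε : ℝ) : ℝ := Real.arsinh (alphaTilde r ε / r)

/-- The capacitance coefficient C₁₁ for two identical spheres of radius `r`. -/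
noncomputable def C11sym (r ε : ℝ) : ℝ :=
  8 * π * alphaTilde r ε *
    ∑' n : ℕ, Real.exp ((2 * n + 1) * xi0 r ε) /
      (Real.exp (2 * (2 * n + 1) * xi0 r ε) - 1)

/-- The capacitance coefficient C₁₂ for two identical spheres of radius `r`. -/
noncomputable def C12sym (r ε : ℝ) : ℝ :=
  -(8 * π * alphaTilde r ε *
    ∑' n : ℕ, 1 / (Real.exp (2 * (2 * n + 1) * xi0 r ε) - 1))

/-- Antiderivative `G u = u - log (1 + e^u)` of `u ↦ 1/(e^u + 1)`. -/
noncomputable def Gfun (u : ℝ) : ℝ := u - Real.log (1 + Real.exp u)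

lemma Gfun_eq (u : ℝ) : Gfun u = -Real.log (1 + Real.exp (-u)) := by
  have h1 : (1 : ℝ) + Real.exp u = Real.exp u * (1 + Real.exp (-u)) := by
    rw [mul_add, mul_one, ← Real.exp_add, add_neg_cancel, Real.exp_zero]; ring
  have h2 : (0:ℝ) < 1 + Real.exp (-u) := by positivity
  rw [Gfun, h1, Real.log_mul (Real.exp_ne_zero u) (ne_of_gt h2), Real.log_exp]
  ring

lemma Gfun_neg (u : ℝ) : Gfun u < 0 := by
  rw [Gfun_eq]
  have : 0 < Real.log (1 + Real.exp (-u)) :=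
    Real.log_pos (by have := Real.exp_pos (-u); linarith)
  linarith

lemma continuous_Gfun : Continuous Gfun := by
  unfold Gfun
  exact continuous_id.sub ((continuous_const.add Real.continuous_exp).log
    (fun x => by show (1:ℝ) + Real.exp x ≠ 0; positivity))

lemma hasDerivAt_Gfun (x : ℝ) :
    HasDerivAt Gfun (1 / (Real.exp x + 1)) x := by
  have h2 : (0:ℝ) < 1 + Real.exp x := by positivity
  have h : HasDerivAt (fun u : ℝ => u - Real.log (1 + Real.exp u))
      (1 - Real.exp x / (1 + Real.exp x)) x := by
    exact (hasDerivAt_id x).sub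
      (((hasDerivAt_exp x).const_add 1).log (ne_of_gt h2))
  have e : Gfun = fun u : ℝ => u - Real.log (1 + Real.exp u) := rfl
  rw [e]
  convert h using 1
  rw [one_sub_div (ne_of_gt h2)]
  ring

lemma Gfun_tendsto_atTop : Tendsto Gfun atTop (𝓝 0) := by
  have h : Tendsto (fun u : ℝ => -Real.log (1 + Real.exp (-u))) atTop (𝓝 0) := by
    have h1 : Tendsto (fun u : ℝ => Real.exp (-u)) atTop (𝓝 0) := by
      simpa using Real.tendsto_exp_neg_atTop_nhds_zero
    have h2 : Tendsto (fun u : ℝ => Real.log (1 + Real.exp (-u))) atTop (𝓝 (Real.log (1 + 0))) :=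
      ((Real.continuousAt_log (by norm_num)).tendsto.comp
        ((tendsto_const_nhds.add h1)))
    simpa using h2.neg
  exact h.congr (fun u => (Gfun_eq u).symm)

/-- Mean value bounds for `Gfun` increments. -/
lemma Gfun_slope_bounds {a b : ℝ} (hab : a < b) :
    (b - a) * (1 / (Real.exp b + 1)) ≤ Gfun b - Gfun a ∧
    Gfun b - Gfun a ≤ (b - a) * (1 / (Real.exp a + 1)) := by
  obtain ⟨c, hc, hceq⟩ := exists_hasDerivAt_eq_slope Gfun (fun u => 1 / (Real.exp u + 1)) hab
    continuous_Gfun.continuousOn (fun x _ => hasDerivAt_Gfun x)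
  have hba : (0:ℝ) < b - a := by linarith
  have hGeq : Gfun b - Gfun a = (b - a) * (1 / (Real.exp c + 1)) := by
    rw [hceq]; field_simp
  constructor
  · rw [hGeq]
    apply mul_le_mul_of_nonneg_left _ hba.le
    apply one_div_le_one_div_of_le (by positivity)
    have := Real.exp_le_exp.2 hc.2.le
    linarith
  · rw [hGeq]
    apply mul_le_mul_of_nonneg_left _ hba.le
    apply one_div_le_one_div_of_le (by positivity)
    have := Real.exp_le_exp.2 hc.1.le
    linarith

/-- The term function of the combined series. -/
noncomputable def fterm (t : ℝ) (n : ℕ) : ℝ := 1 / (Real.exp ((2 * n + 1) * t) + 1)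

lemma fterm_nonneg (t : ℝ) (n : ℕ) : 0 ≤ fterm t n := by
  unfold fterm; positivity

lemma fterm_le_half {t : ℝ} (ht : 0 < t) (n : ℕ) : fterm t n ≤ 1 / 2 := by
  unfold fterm
  apply one_div_le_one_div_of_le (by norm_num)
  have : (1:ℝ) ≤ Real.exp ((2 * n + 1) * t) := by
    apply Real.one_le_exp; positivity
  linarith

lemma one_div_exp_add_one_le (x : ℝ) : 1 / (Real.exp x + 1) ≤ Real.exp (-x) := by
  rw [div_le_iff₀ (by positivity), Real.exp_neg]
  rw [inv_mul_eq_div, le_div_iff₀ (Real.exp_pos x)]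
  have := Real.exp_pos x
  nlinarith [Real.exp_pos x]

lemma summable_fterm {t : ℝ} (ht : 0 < t) : Summable (fterm t) := by
  have hgeo : Summable (fun n : ℕ => Real.exp (-t) * (Real.exp (-(2*t))) ^ n) :=
    (summable_geometric_of_lt_one (Real.exp_pos _).le
      (Real.exp_lt_one_iff.2 (by linarith))).mul_left _
  refine Summable.of_nonneg_of_le (fterm_nonneg t) (fun n => ?_) hgeo
  · have h1 : fterm t n ≤ Real.exp (-((2 * n + 1) * t)) := one_div_exp_add_one_le _
    have h2 : Real.exp (-((2 * (n:ℝ) + 1) * t)) = Real.exp (-t) * Real.exp (-(2*t)) ^ n := by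
      rw [← Real.exp_nat_mul, ← Real.exp_add]
      ring_nf
    rw [h2] at h1
    exact h1

/-- The combined series. -/
noncomputable def Sfun (t : ℝ) : ℝ := ∑' n : ℕ, fterm t n

lemma hfun_step {t : ℝ} (ht : 0 < t) (n : ℕ) :
    2 * t * fterm t (n + 1) ≤ Gfun ((2 * ((n+1 : ℕ) : ℝ) + 1) * t) - Gfun ((2 * n + 1) * t) ∧
    Gfun ((2 * ((n+1 : ℕ) : ℝ) + 1) * t) - Gfun ((2 * n + 1) * t) ≤ 2 * t * fterm t n := by
  have hab : (2 * (n:ℝ) + 1) * t < (2 * ((n+1 : ℕ) : ℝ) + 1) * t := by push_cast; nlinarith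
  have hdiff : (2 * ((n+1 : ℕ) : ℝ) + 1) * t - (2 * (n:ℝ) + 1) * t = 2 * t := by push_cast; ring
  obtain ⟨h1, h2⟩ := Gfun_slope_bounds hab
  rw [hdiff] at h1 h2
  constructor
  · refine le_trans (le_of_eq ?_) (by exact_mod_cast h1)
    unfold fterm; push_cast; ring_nf
  · refine le_trans (by exact_mod_cast h2) (le_of_eq ?_)
    unfold fterm; push_cast; ring_nf

lemma Sfun_lower {t : ℝ} (ht : 0 < t) : -Gfun t ≤ 2 * t * Sfun t := by
  set h : ℕ → ℝ := fun n => Gfun ((2 * n + 1) * t) with hh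
  have hbound : ∀ N : ℕ, h N - h 0 ≤ 2 * t * Sfun t := by
    intro N
    have htel : ∑ n ∈ Finset.range N, (h (n+1) - h n) = h N - h 0 :=
      Finset.sum_range_sub h N
    have hsum : ∑ n ∈ Finset.range N, (h (n+1) - h n)
        ≤ ∑ n ∈ Finset.range N, 2 * t * fterm t n := by
      apply Finset.sum_le_sum
      intro n _
      exact (hfun_step ht n).2
    have hle : ∑ n ∈ Finset.range N, 2 * t * fterm t n ≤ 2 * t * Sfun t := by
      rw [← Finset.mul_sum]
      apply mul_le_mul_of_nonneg_left _ (by linarith)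
      exact Summable.sum_le_tsum _ (fun n _ => fterm_nonneg t n) (summable_fterm ht)
    linarith [htel ▸ hsum]
  have hlim : Tendsto (fun N : ℕ => h N - h 0) atTop (𝓝 (0 - h 0)) := by
    apply Tendsto.sub_const
    apply Gfun_tendsto_atTop.comp
    apply Filter.tendsto_atTop_mono (f := fun N : ℕ => (N : ℝ) * t)
    · intro N; nlinarith [Nat.cast_nonneg (α := ℝ) N, ht]
    · exact tendsto_natCast_atTop_atTop.atTop_mul_const ht
  have := le_of_tendsto' hlim hbound
  have h0 : h 0 = Gfun t := by simp [hh]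
  rw [h0] at this
  linarith

lemma Sfun_upper {t : ℝ} (ht : 0 < t) : 2 * t * Sfun t ≤ t - Gfun t := by
  set h : ℕ → ℝ := fun n => Gfun ((2 * n + 1) * t) with hh
  have h0 : h 0 = Gfun t := by simp [hh]
  have hshift : Sfun t = fterm t 0 + ∑' n : ℕ, fterm t (n + 1) := by
    exact Summable.tsum_eq_zero_add (summable_fterm ht)
  have htail : ∑' n : ℕ, 2 * t * fterm t (n + 1) ≤ -Gfun t := by
    apply Summable.tsum_le_of_sum_range_le
    · apply Summable.mul_left
      exact ((summable_fterm ht).comp_injective (add_left_injective 1))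
    · intro N
      have htel : ∑ n ∈ Finset.range N, (h (n+1) - h n) = h N - h 0 :=
        Finset.sum_range_sub h N
      have hsum : ∑ n ∈ Finset.range N, 2 * t * fterm t (n+1)
          ≤ ∑ n ∈ Finset.range N, (h (n+1) - h n) := by
        apply Finset.sum_le_sum
        intro n _
        exact (hfun_step ht n).1
      have hN : h N < 0 := Gfun_neg _
      rw [htel, h0] at hsum
      linarith
  have htail' : (∑' n : ℕ, 2 * t * fterm t (n + 1)) = 2 * t * ∑' n : ℕ, fterm t (n+1) := by
    exact tsum_mul_left
  have hf0 : 2 * t * fterm t 0 ≤ t := by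
    have := fterm_le_half ht 0
    nlinarith
  rw [hshift, mul_add]
  rw [htail'] at htail
  linarith

lemma tendsto_mul_Sfun : Tendsto (fun t => t * Sfun t) (𝓝[>] (0:ℝ)) (𝓝 (Real.log 2 / 2)) := by
  have hmem : ∀ᶠ t in 𝓝[>] (0:ℝ), 0 < t := eventually_mem_nhdsWithin
  have hG0 : Gfun 0 = -Real.log 2 := by
    rw [Gfun]; simp [Real.exp_zero]; norm_num
  have hGc : Tendsto Gfun (𝓝[>] (0:ℝ)) (𝓝 (-Real.log 2)) := by
    rw [← hG0]
    exact (continuous_Gfun.tendsto 0).mono_left nhdsWithin_le_nhds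
  have hlow : Tendsto (fun t => -Gfun t / 2) (𝓝[>] (0:ℝ)) (𝓝 (Real.log 2 / 2)) := by
    have := (hGc.neg).div_const 2
    simpa using this
  have hup : Tendsto (fun t => (t - Gfun t) / 2) (𝓝[>] (0:ℝ)) (𝓝 (Real.log 2 / 2)) := by
    have ht0 : Tendsto (fun t : ℝ => t) (𝓝[>] (0:ℝ)) (𝓝 0) :=
      tendsto_id.mono_left nhdsWithin_le_nhds
    have := (ht0.sub hGc).div_const 2
    simpa using this
  apply tendsto_of_tendsto_of_tendsto_of_le_of_le' hlow hup
  · filter_upwards [hmem] with t ht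
    have := Sfun_lower ht
    linarith
  · filter_upwards [hmem] with t ht
    have := Sfun_upper ht
    linarith

lemma tsum_AB {t : ℝ} (ht : 0 < t) :
    (∑' n : ℕ, Real.exp ((2 * n + 1) * t) / (Real.exp (2 * (2 * n + 1) * t) - 1)) -
      (∑' n : ℕ, 1 / (Real.exp (2 * (2 * n + 1) * t) - 1)) = Sfun t := by
  set q : ℝ := Real.exp (-(2 * t)) with hqdef
  have hq0 : 0 < q := Real.exp_pos _
  have hq1 : q < 1 := Real.exp_lt_one_iff.2 (by linarith)
  have h1q : (0:ℝ) < 1 - q := by linarith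
  have hEE : ∀ n : ℕ, Real.exp (2 * (2 * n + 1) * t)
      = Real.exp ((2 * n + 1) * t) * Real.exp ((2 * n + 1) * t) := by
    intro n
    rw [show (2 * (2 * (n:ℝ) + 1) * t) = (2 * n + 1) * t + (2 * n + 1) * t by ring,
      Real.exp_add]
  have hx : ∀ n : ℕ, 0 < (2 * (n:ℝ) + 1) * t := by
    intro n; positivity
  have hE1 : ∀ n : ℕ, 1 < Real.exp ((2 * (n:ℝ) + 1) * t) := by
    intro n; exact Real.one_lt_exp_iff.2 (hx n)
  have hD : ∀ n : ℕ, 0 < Real.exp (2 * (2 * n + 1) * t) - 1 := by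
    intro n; rw [hEE n]; nlinarith [hE1 n]
  have hxE : ∀ n : ℕ, Real.exp (-t) * q ^ n = Real.exp (-((2 * (n:ℝ) + 1) * t)) := by
    intro n
    rw [hqdef, ← Real.exp_nat_mul, ← Real.exp_add]
    congr 1
    ring
  have hAle : ∀ n : ℕ, Real.exp ((2 * n + 1) * t) / (Real.exp (2 * (2 * n + 1) * t) - 1)
      ≤ (1 - q)⁻¹ * (Real.exp (-t) * q ^ n) := by
    intro n
    set x : ℝ := (2 * (n:ℝ) + 1) * t with hxdef
    have hDn := hD n
    rw [hxE n, hEE n, div_le_iff₀ (by rw [hEE n] at hDn; exact hDn)]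
    have hFE : Real.exp (-x) * Real.exp x = 1 := by
      rw [← Real.exp_add]; simp
    have hqE : Real.exp (-x) ≤ q * Real.exp x := by
      have hq' : q * Real.exp x = Real.exp (x - 2 * t) := by
        rw [hqdef, ← Real.exp_add]; ring_nf
      rw [hq']
      apply Real.exp_le_exp.2
      have hxt : t ≤ x := by
        rw [hxdef]; nlinarith [Nat.cast_nonneg (α := ℝ) n]
      linarith
    have heq : (1 - q)⁻¹ * Real.exp (-x) * (Real.exp x * Real.exp x - 1)
        = (1 - q)⁻¹ * (Real.exp x - Real.exp (-x)) := by
      linear_combination (1 - q)⁻¹ * Real.exp x * hFE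
    rw [heq]
    have hstep : (1 - q) * Real.exp x ≤ Real.exp x - Real.exp (-x) := by nlinarith
    calc Real.exp x = (1 - q)⁻¹ * ((1 - q) * Real.exp x) := by field_simp
      _ ≤ (1 - q)⁻¹ * (Real.exp x - Real.exp (-x)) := by
          exact mul_le_mul_of_nonneg_left hstep (by positivity)
  have hgeo : Summable (fun n : ℕ => (1 - q)⁻¹ * (Real.exp (-t) * q ^ n)) :=
    ((summable_geometric_of_lt_one hq0.le hq1).mul_left _).mul_left _
  have hA : Summable (fun n : ℕ =>
      Real.exp ((2 * n + 1) * t) / (Real.exp (2 * (2 * n + 1) * t) - 1)) := by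
    refine Summable.of_nonneg_of_le (fun n => ?_) hAle hgeo
    exact le_of_lt (div_pos (Real.exp_pos _) (hD n))
  have hB : Summable (fun n : ℕ => 1 / (Real.exp (2 * (2 * n + 1) * t) - 1)) := by
    refine Summable.of_nonneg_of_le (fun n => ?_) (fun n => ?_) hA
    · exact le_of_lt (div_pos one_pos (hD n))
    · rw [div_le_div_iff₀ (hD n) (hD n)]
      nlinarith [hE1 n, hD n]
  have hterm : ∀ n : ℕ,
      Real.exp ((2 * n + 1) * t) / (Real.exp (2 * (2 * n + 1) * t) - 1)
        - 1 / (Real.exp (2 * (2 * n + 1) * t) - 1) = fterm t n := by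
    intro n
    rw [div_sub_div_same, fterm, hEE n]
    rw [div_eq_div_iff (ne_of_gt (by nlinarith [hE1 n])) (by positivity)]
    ring
  rw [← Summable.tsum_sub hA hB]
  exact tsum_congr hterm

theorem C11_add_C12_tendsto (r : ℝ) (hr : 0 < r) :
    Tendsto (fun ε => C11sym r ε + C12sym r ε) (𝓝[>] (0 : ℝ))
      (𝓝 (4 * π * r * Real.log 2)) := by
  have hmem : ∀ᶠ ε in 𝓝[>] (0:ℝ), 0 < ε := eventually_mem_nhdsWithin
  -- α̃ is continuous in ε and vanishes at 0
  have hαcont : Continuous fun ε : ℝ => alphaTilde r ε := by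
    unfold alphaTilde
    exact Real.continuous_sqrt.comp
      (continuous_id.mul (continuous_const.add (continuous_id.div_const 4)))
  have hα0 : alphaTilde r 0 = 0 := by simp [alphaTilde]
  have hαtendsto : Tendsto (fun ε => alphaTilde r ε) (𝓝[>] (0:ℝ)) (𝓝 0) := by
    have := (hαcont.tendsto 0).mono_left (nhdsWithin_le_nhds (s := Set.Ioi (0:ℝ)))
    rwa [hα0] at this
  have hαpos : ∀ᶠ ε in 𝓝[>] (0:ℝ), 0 < alphaTilde r ε := by
    filter_upwards [hmem] with ε hε
    exact Real.sqrt_pos.2 (by nlinarith)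
  -- u = α̃ / r tends to 0 within (0, ∞)
  have hu : Tendsto (fun ε => alphaTilde r ε / r) (𝓝[>] (0:ℝ)) (𝓝[>] (0:ℝ)) := by
    apply tendsto_nhdsWithin_of_tendsto_nhds_of_eventually_within
    · simpa using hαtendsto.div_const r
    · filter_upwards [hαpos] with ε hε
      exact div_pos hε hr
  -- ξ₀ tends to 0 within (0, ∞)
  have htpos : ∀ᶠ ε in 𝓝[>] (0:ℝ), 0 < xi0 r ε := by
    filter_upwards [hαpos] with ε hε
    exact Real.arsinh_pos_iff.2 (div_pos hε hr)
  have ht : Tendsto (fun ε => xi0 r ε) (𝓝[>] (0:ℝ)) (𝓝[>] (0:ℝ)) := by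
    apply tendsto_nhdsWithin_of_tendsto_nhds_of_eventually_within
    · have harsinh : Tendsto Real.arsinh (𝓝 0) (𝓝 0) := by
        have := Real.continuous_arsinh.tendsto 0
        rwa [Real.arsinh_zero] at this
      exact harsinh.comp (hu.mono_right nhdsWithin_le_nhds)
    · exact htpos
  -- x / arsinh x → 1 as x → 0
  have hslope : Tendsto (fun x : ℝ => x / Real.arsinh x) (𝓝[≠] (0:ℝ)) (𝓝 1) := by
    have hd := Real.hasDerivAt_arsinh 0
    rw [hasDerivAt_iff_tendsto_slope] at hd
    have hd1 : Tendsto (slope Real.arsinh 0) (𝓝[≠] (0:ℝ)) (𝓝 1) := by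
      convert hd using 2
      norm_num
    have := hd1.inv₀ one_ne_zero
    rw [inv_one] at this
    apply this.congr
    intro x
    simp [slope_def_field, Real.arsinh_zero, inv_div]
  -- α̃ / ξ₀ → r
  have h1 : Tendsto (fun ε => alphaTilde r ε / xi0 r ε) (𝓝[>] (0:ℝ)) (𝓝 r) := by
    have hmono : 𝓝[>] (0:ℝ) ≤ 𝓝[≠] (0:ℝ) :=
      nhdsWithin_mono 0 (fun x hx => ne_of_gt hx)
    have hcomp : Tendsto (fun ε => (alphaTilde r ε / r) / Real.arsinh (alphaTilde r ε / r))
        (𝓝[>] (0:ℝ)) (𝓝 1) := (hslope.mono_left hmono).comp hu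
    have := tendsto_const_nhds (x := r) (f := 𝓝[>] (0:ℝ)) |>.mul hcomp
    rw [mul_one] at this
    apply this.congr
    intro ε
    rw [xi0, show r * (alphaTilde r ε / r / Real.arsinh (alphaTilde r ε / r))
      = (r * (alphaTilde r ε / r)) / Real.arsinh (alphaTilde r ε / r) by ring,
      mul_div_cancel₀ _ hr.ne']
  -- ξ₀ · S(ξ₀) → log 2 / 2
  have h2 : Tendsto (fun ε => xi0 r ε * Sfun (xi0 r ε)) (𝓝[>] (0:ℝ))
      (𝓝 (Real.log 2 / 2)) := tendsto_mul_Sfun.comp ht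
  have hfinal : Tendsto
      (fun ε => 8 * π * ((alphaTilde r ε / xi0 r ε) * (xi0 r ε * Sfun (xi0 r ε))))
      (𝓝[>] (0:ℝ)) (𝓝 (8 * π * (r * (Real.log 2 / 2)))) :=
    tendsto_const_nhds.mul (h1.mul h2)
  have hval : 8 * π * (r * (Real.log 2 / 2)) = 4 * π * r * Real.log 2 := by ring
  rw [hval] at hfinal
  apply hfinal.congr'
  filter_upwards [hmem, hαpos, htpos] with ε hε hα htp
  have hS := tsum_AB htp
  unfold C11sym C12sym
  rw [show 8 * π * ((alphaTilde r ε / xi0 r ε) * (xi0 r ε * Sfun (xi0 r ε)))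
      = 8 * π * alphaTilde r ε * Sfun (xi0 r ε) by field_simp]
  rw [← hS]
  ring
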